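/- Let ν > 0 be real and λ ∈ ℝ, λ ≠ 0. Define f, g : (0, ∞) → ℂ by f(r) = r^{1/2 − ν} J_{ν − 1/2}(|λ| r) and g(r) = − i · sgn(λ) · r^{1/2 − ν} J_{ν + 1/2}(|λ| r). Then f and g are differentiable on (0, ∞) and satisfy the coupled first-order radial Dirac system: i f′(r) = λ g(r) and i g′(r) = λ f(r) − (2 i ν / r) g(r) for all r > 0. -/

import Mathlib

open scoped Real

/-- Bessel function of the first kind of real order `μ` (for `x > 0`), defined by its
power series `J_μ(x) = ∑_{k} (−1)^k (x/2)^{μ+2k} / (k! Γ(μ+k+1))` with real powers. -/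
noncomputable def besselJ (μ : ℝ) (x : ℝ) : ℝ :=
  ∑' k : ℕ, (-1 : ℝ) ^ k * (x / 2) ^ (μ + 2 * (k : ℝ)) /
    ((k.factorial : ℝ) * Real.Gamma (μ + k + 1))

/-- The radial profiles `f(r) = r^{1/2−ν} J_{ν−1/2}(|λ|r)` and
`g(r) = −i sgn(λ) r^{1/2−ν} J_{ν+1/2}(|λ|r)` of the Dirac eigenspinors. -/
noncomputable def fRad (ν lam : ℝ) (r : ℝ) : ℂ :=
  ((r ^ ((1 : ℝ) / 2 - ν) * besselJ (ν - 1 / 2) (|lam| * r) : ℝ) : ℂ)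

noncomputable def gRad (ν lam : ℝ) (r : ℝ) : ℂ :=
  -Complex.I * (Real.sign lam : ℂ) *
    ((r ^ ((1 : ℝ) / 2 - ν) * besselJ (ν + 1 / 2) (|lam| * r) : ℝ) : ℂ)

open Filter

lemma summable_master (μ : ℝ) (hμ : 0 < μ) {x : ℝ} (hx : 0 ≤ x) :
    Summable (fun k : ℕ => (2 * (k : ℝ) + 1) * x ^ k / (k.factorial * Real.Gamma (μ + k))) := by
  apply summable_of_ratio_norm_eventually_le (r := 1/2) (by norm_num)
  filter_upwards [eventually_ge_atTop (⌈(6:ℝ) * x⌉₊ + 1)] with k hk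
  have hk1 : (1 : ℕ) ≤ k := le_trans (Nat.le_add_left 1 _) hk
  have hkx : 6 * x ≤ (k : ℝ) := by
    calc 6 * x ≤ (⌈(6:ℝ)*x⌉₊ : ℝ) := Nat.le_ceil _
    _ ≤ (k : ℝ) := by exact_mod_cast le_trans (Nat.le_add_right _ 1) hk
  have hΓpos : 0 < Real.Gamma (μ + k) := Real.Gamma_pos_of_pos (by positivity)
  have hΓrec : Real.Gamma (μ + ((k:ℝ) + 1)) = (μ + k) * Real.Gamma (μ + k) := by
    push_cast
    rw [show μ + ((k : ℝ) + 1) = (μ + k) + 1 by ring, Real.Gamma_add_one (by positivity)]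
  have hfac : ((k + 1).factorial : ℝ) = (k + 1) * k.factorial := by
    rw [Nat.factorial_succ]; push_cast; ring
  have h1 : (0:ℝ) ≤ (2 * (k : ℝ) + 1) * x ^ k / (k.factorial * Real.Gamma (μ + k)) := by positivity
  have h2 : (0:ℝ) ≤ (2 * ((k:ℝ)+1) + 1) * x ^ (k+1) / ((k+1).factorial * Real.Gamma (μ + (k+1:ℕ))) := by
    have : 0 < Real.Gamma (μ + (k+1:ℕ)) := Real.Gamma_pos_of_pos (by positivity)
    positivity
  rw [Real.norm_of_nonneg h1, Real.norm_of_nonneg (by push_cast at h2 ⊢; convert h2 using 3 <;> push_cast <;> ring)]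
  push_cast
  rw [hΓrec, hfac, show (1:ℝ)/2 * ((2*(k:ℝ)+1)*x^k/((k.factorial:ℝ)*Real.Gamma (μ+(k:ℝ)))) = ((2*(k:ℝ)+1)*x^k/2)/((k.factorial:ℝ)*Real.Gamma (μ+(k:ℝ))) from by ring, div_le_div_iff₀ (by positivity) (by positivity)]
  have hxk : (0:ℝ) ≤ x ^ k := by positivity
  have hkR : (1:ℝ) ≤ (k:ℝ) := by exact_mod_cast hk1
  rw [pow_succ]
  have hD : (0:ℝ) < (k.factorial:ℝ) * Real.Gamma (μ + k) := by positivity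
  have key : (2*((k:ℝ)+1)+1) * (x^k*x) ≤ (2*(k:ℝ)+1)*x^k/2 * (((k:ℝ)+1)*(μ+(k:ℝ))) := by
    nlinarith [mul_le_mul_of_nonneg_left hkx hxk, mul_nonneg hxk hx, sq_nonneg ((k:ℝ)),
      mul_le_mul_of_nonneg_left (mul_le_mul_of_nonneg_left hkx hxk) (le_of_lt (show (0:ℝ) < (k:ℝ) from by linarith)),
      mul_nonneg (mul_nonneg hxk hx) (le_of_lt hμ), mul_nonneg hxk (le_of_lt hμ)]
  nlinarith [mul_le_mul_of_nonneg_right key (le_of_lt hD)]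

noncomputable def Ak (ν a : ℝ) (k : ℕ) : ℝ :=
  (-1)^k * (a/2)^(ν - 1/2) * ((a/2)^2)^k / (k.factorial * Real.Gamma (ν + 1/2 + k))

noncomputable def Bk (ν a : ℝ) (k : ℕ) : ℝ :=
  (-1)^k * (a/2)^(ν + 1/2) * ((a/2)^2)^k / (k.factorial * Real.Gamma (ν + 3/2 + k))

section core
variable {ν a : ℝ} (hν : 0 < ν) (ha : 0 < a)
include hν ha

lemma absAk (k : ℕ) : |Ak ν a k| = (a/2)^(ν - 1/2) * ((a/2)^2)^k / (k.factorial * Real.Gamma (ν + 1/2 + k)) := by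
  have h1 : (0:ℝ) < (a/2)^(ν - 1/2) := Real.rpow_pos_of_pos (by linarith) _
  have h2 : (0:ℝ) < Real.Gamma (ν + 1/2 + k) := Real.Gamma_pos_of_pos (by positivity)
  rw [Ak, abs_div, abs_mul, abs_mul, abs_pow, abs_neg, abs_one, one_pow, one_mul,
    abs_of_pos h1, abs_of_pos (by positivity : (0:ℝ) < ((a/2)^2)^k),
    abs_of_pos (by positivity : (0:ℝ) < (k.factorial : ℝ) * Real.Gamma (ν + 1/2 + k))]

lemma absBk (k : ℕ) : |Bk ν a k| = (a/2)^(ν + 1/2) * ((a/2)^2)^k / (k.factorial * Real.Gamma (ν + 3/2 + k)) := by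
  have h1 : (0:ℝ) < (a/2)^(ν + 1/2) := Real.rpow_pos_of_pos (by linarith) _
  have h2 : (0:ℝ) < Real.Gamma (ν + 3/2 + k) := Real.Gamma_pos_of_pos (by positivity)
  rw [Bk, abs_div, abs_mul, abs_mul, abs_pow, abs_neg, abs_one, one_pow, one_mul,
    abs_of_pos h1, abs_of_pos (by positivity : (0:ℝ) < ((a/2)^2)^k),
    abs_of_pos (by positivity : (0:ℝ) < (k.factorial : ℝ) * Real.Gamma (ν + 3/2 + k))]

lemma summable_devA {s : ℝ} (hs : 0 ≤ s) :
    Summable (fun k : ℕ => (2*(k:ℝ)+1) * |Ak ν a k| * s^k) := by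
  have h := (summable_master (ν + 1/2) (by linarith) (x := (a/2)^2 * s) (by positivity)).mul_left
    ((a/2)^(ν - 1/2))
  refine h.congr fun k => ?_
  rw [absAk hν ha, mul_pow]
  ring

lemma summable_devB {s : ℝ} (hs : 0 ≤ s) :
    Summable (fun k : ℕ => (2*(k:ℝ)+1) * |Bk ν a k| * s^k) := by
  have h := (summable_master (ν + 3/2) (by linarith) (x := (a/2)^2 * s) (by positivity)).mul_left
    ((a/2)^(ν + 1/2))
  refine h.congr fun k => ?_
  rw [absBk hν ha, mul_pow]
  ring

lemma summableA (y : ℝ) : Summable (fun k : ℕ => Ak ν a k * y^(2*k)) := by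
  apply Summable.of_norm_bounded (summable_devA hν ha (s := y^2) (by positivity))
  intro k
  have : ‖Ak ν a k * y^(2*k)‖ = |Ak ν a k| * (y^2)^k := by
    rw [norm_mul, Real.norm_eq_abs, Real.norm_eq_abs, pow_mul, abs_pow, abs_of_nonneg (sq_nonneg y)]
  rw [this]
  have h0 : (0:ℝ) ≤ |Ak ν a k| * (y^2)^k := by positivity
  nlinarith [mul_nonneg (mul_nonneg (by positivity : (0:ℝ) ≤ 2*(k:ℝ)) (abs_nonneg (Ak ν a k))) (by positivity : (0:ℝ) ≤ (y^2)^k)]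

lemma summableB (y : ℝ) : Summable (fun k : ℕ => Bk ν a k * y^(2*k)) := by
  apply Summable.of_norm_bounded (summable_devB hν ha (s := y^2) (by positivity))
  intro k
  have : ‖Bk ν a k * y^(2*k)‖ = |Bk ν a k| * (y^2)^k := by
    rw [norm_mul, Real.norm_eq_abs, Real.norm_eq_abs, pow_mul, abs_pow, abs_of_nonneg (sq_nonneg y)]
  rw [this]
  nlinarith [mul_nonneg (mul_nonneg (by positivity : (0:ℝ) ≤ 2*(k:ℝ)) (abs_nonneg (Bk ν a k))) (by positivity : (0:ℝ) ≤ (y^2)^k)]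

lemma summableB' (y : ℝ) : Summable (fun k : ℕ => Bk ν a k * y^(2*k+1)) := by
  have := (summableB hν ha y).mul_left y
  refine this.congr fun k => ?_
  rw [pow_succ]
  ring
lemma rpow_key : (a/2)^(ν - 1/2) * (a/2)^2 = (a/2)^(ν + 1/2) * (a/2) := by
  have ha2 : (0:ℝ) < a/2 := by linarith
  rw [show ((a/2):ℝ)^(2:ℕ) = (a/2)^((2:ℝ)) by rw [← Real.rpow_natCast (a/2) 2]; norm_num,
    show (a/2 : ℝ)^(ν+1/2) * (a/2) = (a/2)^(ν+1/2) * (a/2)^((1:ℝ)) by rw [Real.rpow_one],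
    ← Real.rpow_add ha2, ← Real.rpow_add ha2]
  congr 1
  ring

lemma coefAB (k : ℕ) : Ak ν a (k+1) * ((2*(k+1) : ℕ) : ℝ) = -a * Bk ν a k := by
  have hΓ : (0:ℝ) < Real.Gamma (ν + 3/2 + k) := Real.Gamma_pos_of_pos (by positivity)
  have hf' : ((k+1).factorial : ℝ) = ((k:ℝ)+1) * (k.factorial : ℝ) := by
    rw [Nat.factorial_succ]; push_cast; ring
  have hfk : (0:ℝ) < (k.factorial : ℝ) := by exact_mod_cast k.factorial_pos
  have hkey := rpow_key hν ha
  rw [Ak, Bk, show ν + 1/2 + ((k+1 : ℕ):ℝ) = ν + 3/2 + (k:ℝ) by push_cast; ring, hf']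
  set b := a/2 with hb
  have hb2 : a = 2*b := by rw [hb]; ring
  set c := b^(ν - 1/2) with hc
  set d := b^(ν + 1/2) with hd
  clear_value b
  clear_value c d
  rw [hb2, div_mul_eq_mul_div, ← mul_div_assoc,
    div_eq_div_iff (by positivity) (by positivity)]
  push_cast
  linear_combination ((-1:ℝ)^(k+1) * 2*((k:ℝ)+1) * (b^2)^k * (k.factorial:ℝ) * Real.Gamma (ν+3/2+(k:ℝ))) * hkey

lemma coefBA (k : ℕ) : (((2*k : ℕ) : ℝ) + 1) * Bk ν a k = a * Ak ν a k - 2*ν*Bk ν a k := by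
  have hΓ1 : (0:ℝ) < Real.Gamma (ν + 1/2 + k) := Real.Gamma_pos_of_pos (by positivity)
  have hΓrec : Real.Gamma (ν + 3/2 + k) = (ν + 1/2 + k) * Real.Gamma (ν + 1/2 + k) := by
    rw [show ν + 3/2 + (k:ℝ) = (ν + 1/2 + k) + 1 by ring, Real.Gamma_add_one (by positivity)]
  have hfk : (0:ℝ) < (k.factorial : ℝ) := by exact_mod_cast k.factorial_pos
  have hkey := rpow_key hν ha
  rw [Ak, Bk, hΓrec]
  set G1 := Real.Gamma (ν + 1/2 + (k:ℝ)) with hG1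
  clear_value G1
  set b := a/2 with hb
  have hb2 : a = 2*b := by rw [hb]; ring
  have hbne : b ≠ 0 := by rw [hb]; positivity
  set c := b^(ν - 1/2) with hc
  set d := b^(ν + 1/2) with hd
  clear_value b
  clear_value c d
  have hkey2 : c * b = d := by
    apply mul_right_cancel₀ hbne
    linear_combination hkey
  rw [hb2]
  have hD : ((k.factorial:ℝ) * ((ν + 1/2 + k) * Real.Gamma (ν + 1/2 + k))) ≠ 0 := by positivity
  have hD2 : ((k.factorial:ℝ) * Real.Gamma (ν + 1/2 + k)) ≠ 0 := by positivity
  field_simp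
  push_cast
  linear_combination (-(2*(k:ℝ)+2*ν+1)) * hkey2
lemma besselJ_eqA {r : ℝ} (hr : 0 < r) :
    r^((1:ℝ)/2 - ν) * besselJ (ν - 1/2) (a*r) = ∑' k : ℕ, Ak ν a k * r^(2*k) := by
  have ha2 : (0:ℝ) < a/2 := by linarith
  rw [besselJ, ← tsum_mul_left]
  apply tsum_congr
  intro k
  have e1 : ((a*r)/2 : ℝ)^(ν - 1/2 + 2*(k:ℝ)) =
      (a/2)^(ν - 1/2) * ((a/2)^2)^k * (r^(ν - 1/2) * r^(2*k)) := by
    rw [show (a*r)/2 = (a/2)*r by ring, Real.mul_rpow ha2.le hr.le,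
      Real.rpow_add ha2, Real.rpow_add hr,
      show (2*(k:ℝ)) = ((2*k : ℕ):ℝ) by push_cast; ring,
      Real.rpow_natCast, Real.rpow_natCast, pow_mul, pow_mul]
  have e2 : r^((1:ℝ)/2 - ν) * r^(ν - 1/2) = 1 := by
    rw [← Real.rpow_add hr, show (1:ℝ)/2 - ν + (ν - 1/2) = 0 by ring, Real.rpow_zero]
  rw [e1, show Real.Gamma (ν - 1/2 + (k:ℝ) + 1) = Real.Gamma (ν + 1/2 + k) by congr 1; ring, Ak]
  have hΓ : (0:ℝ) < Real.Gamma (ν + 1/2 + k) := Real.Gamma_pos_of_pos (by positivity)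
  have hfk : (0:ℝ) < (k.factorial : ℝ) := by exact_mod_cast k.factorial_pos
  set G1 := Real.Gamma (ν + 1/2 + (k:ℝ))
  set b := a/2 with hb
  set c := b^(ν - 1/2)
  set q := r^((1:ℝ)/2 - ν)
  set p := r^(ν - 1/2)
  clear_value G1 b c q p
  field_simp
  linear_combination c * e2

lemma besselJ_eqB {r : ℝ} (hr : 0 < r) :
    r^((1:ℝ)/2 - ν) * besselJ (ν + 1/2) (a*r) = ∑' k : ℕ, Bk ν a k * r^(2*k+1) := by
  have ha2 : (0:ℝ) < a/2 := by linarith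
  rw [besselJ, ← tsum_mul_left]
  apply tsum_congr
  intro k
  have e1 : ((a*r)/2 : ℝ)^(ν + 1/2 + 2*(k:ℝ)) =
      (a/2)^(ν + 1/2) * ((a/2)^2)^k * (r^(ν + 1/2) * r^(2*k)) := by
    rw [show (a*r)/2 = (a/2)*r by ring, Real.mul_rpow ha2.le hr.le,
      Real.rpow_add ha2, Real.rpow_add hr,
      show (2*(k:ℝ)) = ((2*k : ℕ):ℝ) by push_cast; ring,
      Real.rpow_natCast, Real.rpow_natCast, pow_mul, pow_mul]
  have e2 : r^((1:ℝ)/2 - ν) * r^(ν + 1/2) = r := by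
    rw [← Real.rpow_add hr, show (1:ℝ)/2 - ν + (ν + 1/2) = 1 by ring, Real.rpow_one]
  rw [e1, show Real.Gamma (ν + 1/2 + (k:ℝ) + 1) = Real.Gamma (ν + 3/2 + k) by congr 1; ring, Bk]
  have hΓ : (0:ℝ) < Real.Gamma (ν + 3/2 + k) := Real.Gamma_pos_of_pos (by positivity)
  have hfk : (0:ℝ) < (k.factorial : ℝ) := by exact_mod_cast k.factorial_pos
  rw [pow_succ]
  set G1 := Real.Gamma (ν + 3/2 + (k:ℝ))
  set b := a/2 with hb
  set c := b^(ν + 1/2)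
  set q := r^((1:ℝ)/2 - ν)
  set p := r^(ν + 1/2)
  clear_value G1 b c q p
  field_simp
  linear_combination c * r^(2*k) * e2
lemma boundA {R y : ℝ} (hR1 : 1 ≤ R) (hy : |y| ≤ R) (k : ℕ) :
    ‖Ak ν a k * (((2*k : ℕ):ℝ) * y^(2*k-1))‖ ≤ (2*(k:ℝ)+1) * |Ak ν a k| * (R^2)^k / R := by
  have hRpos : (0:ℝ) < R := by linarith
  rcases Nat.eq_zero_or_pos k with h0 | hpos
  · subst h0; simp; positivity
  · have h3 : R^(2*k-1) = (R^2)^k / R := by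
      rw [eq_div_iff hRpos.ne', ← pow_succ, ← pow_mul]
      congr 1
      omega
    have h1 : |y|^(2*k-1) ≤ (R^2)^k / R := by
      rw [← h3]
      exact pow_le_pow_left₀ (abs_nonneg y) hy _
    have hmain : ((2*k : ℕ):ℝ) * |y|^(2*k-1) ≤ (2*(k:ℝ)+1) * ((R^2)^k / R) := by
      apply mul_le_mul (by push_cast; linarith) h1 (by positivity) (by positivity)
    rw [norm_mul, norm_mul, Real.norm_eq_abs, Real.norm_eq_abs, Real.norm_eq_abs, abs_pow,
      abs_of_nonneg (by positivity : (0:ℝ) ≤ ((2*k : ℕ):ℝ))]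
    refine le_trans (mul_le_mul_of_nonneg_left hmain (abs_nonneg _)) (le_of_eq (by ring))

lemma boundB {R y : ℝ} (hR1 : 1 ≤ R) (hy : |y| ≤ R) (k : ℕ) :
    ‖Bk ν a k * (((2*k+1 : ℕ):ℝ) * y^(2*k))‖ ≤ (2*(k:ℝ)+1) * |Bk ν a k| * (R^2)^k := by
  have h1 : |y|^(2*k) ≤ (R^2)^k := by
    rw [pow_mul]
    exact pow_le_pow_left₀ (by positivity) (by nlinarith [abs_nonneg y]) k
  have hmain : ((2*k+1 : ℕ):ℝ) * |y|^(2*k) ≤ (2*(k:ℝ)+1) * (R^2)^k := by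
    apply mul_le_mul (by push_cast; linarith) h1 (by positivity) (by positivity)
  rw [norm_mul, norm_mul, Real.norm_eq_abs, Real.norm_eq_abs, Real.norm_eq_abs, abs_pow,
    abs_of_nonneg (by positivity : (0:ℝ) ≤ ((2*k+1 : ℕ):ℝ))]
  refine le_trans (mul_le_mul_of_nonneg_left hmain (abs_nonneg _)) (le_of_eq (by ring))

lemma summable_dA (r : ℝ) : Summable (fun k : ℕ => Ak ν a k * (((2*k : ℕ):ℝ) * r^(2*k-1))) := by
  have hR1 : (1:ℝ) ≤ |r| + 1 := by have := abs_nonneg r; linarith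
  exact Summable.of_norm_bounded ((summable_devA hν ha (by positivity : (0:ℝ) ≤ (|r|+1)^2)).div_const (|r|+1))
    (fun k => boundA hν ha hR1 (by linarith) k)

lemma summable_dB (r : ℝ) : Summable (fun k : ℕ => Bk ν a k * (((2*k+1 : ℕ):ℝ) * r^(2*k))) := by
  have hR1 : (1:ℝ) ≤ |r| + 1 := by have := abs_nonneg r; linarith
  exact Summable.of_norm_bounded (summable_devB hν ha (by positivity : (0:ℝ) ≤ (|r|+1)^2))
    (fun k => boundB hν ha hR1 (by linarith) k)

lemma hasDerivAt_sumA (r : ℝ) :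
    HasDerivAt (fun y : ℝ => ∑' k : ℕ, Ak ν a k * y^(2*k))
      (∑' k : ℕ, Ak ν a k * (((2*k : ℕ):ℝ) * r^(2*k-1))) r := by
  set R := |r| + 1 with hR
  have hR1 : (1:ℝ) ≤ R := by rw [hR]; have := abs_nonneg r; linarith
  have hRpos : (0:ℝ) < R := by linarith
  apply hasDerivAt_tsum_of_isPreconnected
    (u := fun k : ℕ => (2*(k:ℝ)+1) * |Ak ν a k| * (R^2)^k / R)
    (g' := fun (k : ℕ) (y : ℝ) => Ak ν a k * (((2*k : ℕ):ℝ) * y^(2*k-1)))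
    ((summable_devA hν ha (by positivity : (0:ℝ) ≤ R^2)).div_const R)
    Metric.isOpen_ball (convex_ball (0:ℝ) R).isPreconnected
    (fun k y _ => (hasDerivAt_pow (2*k) y).const_mul (Ak ν a k))
    (fun k y hy => boundA hν ha hR1 (by
      have := Metric.mem_ball.mp hy
      rw [Real.dist_eq, sub_zero] at this
      linarith) k)
    (Metric.mem_ball_self hRpos)
    (summableA hν ha 0)
    (by
      rw [Metric.mem_ball, Real.dist_eq, sub_zero, hR]
      linarith)

lemma hasDerivAt_sumB (r : ℝ) :
    HasDerivAt (fun y : ℝ => ∑' k : ℕ, Bk ν a k * y^(2*k+1))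
      (∑' k : ℕ, Bk ν a k * (((2*k+1 : ℕ):ℝ) * r^(2*k))) r := by
  set R := |r| + 1 with hR
  have hR1 : (1:ℝ) ≤ R := by rw [hR]; have := abs_nonneg r; linarith
  have hRpos : (0:ℝ) < R := by linarith
  apply hasDerivAt_tsum_of_isPreconnected
    (u := fun k : ℕ => (2*(k:ℝ)+1) * |Bk ν a k| * (R^2)^k)
    (g' := fun (k : ℕ) (y : ℝ) => Bk ν a k * (((2*k+1 : ℕ):ℝ) * y^(2*k)))
    (summable_devB hν ha (by positivity : (0:ℝ) ≤ R^2))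
    Metric.isOpen_ball (convex_ball (0:ℝ) R).isPreconnected
    (fun k y _ => by simpa using (hasDerivAt_pow (2*k+1) y).const_mul (Bk ν a k))
    (fun k y hy => boundB hν ha hR1 (by
      have := Metric.mem_ball.mp hy
      rw [Real.dist_eq, sub_zero] at this
      linarith) k)
    (Metric.mem_ball_self hRpos)
    (by
      have : (fun k : ℕ => Bk ν a k * (0:ℝ)^(2*k+1)) = fun _ => 0 := funext fun k => by simp
      rw [this]
      exact summable_zero)
    (by
      rw [Metric.mem_ball, Real.dist_eq, sub_zero, hR]
      linarith)

lemma derivA_eq (r : ℝ) :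
    (∑' k : ℕ, Ak ν a k * (((2*k : ℕ):ℝ) * r^(2*k-1)))
      = -a * ∑' k : ℕ, Bk ν a k * r^(2*k+1) := by
  rw [Summable.tsum_eq_zero_add (summable_dA hν ha r)]
  simp only [Nat.mul_zero, Nat.cast_zero, zero_mul, mul_zero, zero_add]
  rw [← tsum_mul_left]
  apply tsum_congr
  intro k
  rw [show 2*(k+1)-1 = 2*k+1 by omega]
  linear_combination r^(2*k+1) * coefAB hν ha k

lemma derivB_eq (r : ℝ) :
    (∑' k : ℕ, Bk ν a k * (((2*k+1 : ℕ):ℝ) * r^(2*k)))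
      = a * (∑' k : ℕ, Ak ν a k * r^(2*k)) - 2*ν * (∑' k : ℕ, Bk ν a k * r^(2*k)) := by
  rw [← tsum_mul_left, ← tsum_mul_left,
    ← Summable.tsum_sub ((summableA hν ha r).mul_left a) ((summableB hν ha r).mul_left (2*ν))]
  apply tsum_congr
  intro k
  have hc := coefBA hν ha k
  push_cast at hc ⊢
  linear_combination r^(2*k) * hc

lemma sumB_factor (r : ℝ) :
    (∑' k : ℕ, Bk ν a k * r^(2*k+1)) = r * ∑' k : ℕ, Bk ν a k * r^(2*k) := by
  rw [← tsum_mul_left]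
  apply tsum_congr
  intro k
  rw [pow_succ]
  ring
end core


/-- the radial functions solve the coupled first-order radial Dirac system
`i f′ = λ g`, `i g′ = λ f − (2iν/r) g` on `(0,∞)`. -/
theorem stmt_5 (ν lam : ℝ) (hν : 0 < ν) (hlam : lam ≠ 0) :
    ∀ r : ℝ, 0 < r →
      DifferentiableAt ℝ (fRad ν lam) r ∧
      DifferentiableAt ℝ (gRad ν lam) r ∧
      Complex.I * deriv (fRad ν lam) r = (lam : ℂ) * gRad ν lam r ∧
      Complex.I * deriv (gRad ν lam) r
        = (lam : ℂ) * fRad ν lam r - (2 * Complex.I * (ν : ℂ) / (r : ℂ)) * gRad ν lam r := by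
  intro r hr
  set a := |lam| with hA
  have ha : 0 < a := abs_pos.mpr hlam
  have hFr := hasDerivAt_sumA hν ha r
  rw [derivA_eq hν ha r] at hFr
  have hGr := hasDerivAt_sumB hν ha r
  rw [derivB_eq hν ha r] at hGr
  have hfeq : fRad ν lam =ᶠ[nhds r] (fun y : ℝ => (((∑' k : ℕ, Ak ν a k * y^(2*k)) : ℝ) : ℂ)) := by
    filter_upwards [isOpen_Ioi.mem_nhds hr] with y hy
    rw [fRad, besselJ_eqA hν ha hy]
  have hgeq : gRad ν lam =ᶠ[nhds r]
      (fun y : ℝ => -Complex.I * (Real.sign lam : ℂ) * (((∑' k : ℕ, Bk ν a k * y^(2*k+1)) : ℝ) : ℂ)) := by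
    filter_upwards [isOpen_Ioi.mem_nhds hr] with y hy
    rw [gRad, besselJ_eqB hν ha hy]
  have hf' : HasDerivAt (fRad ν lam)
      (((-a * ∑' k : ℕ, Bk ν a k * r^(2*k+1) : ℝ)) : ℂ) r :=
    hFr.ofReal_comp.congr_of_eventuallyEq hfeq
  have hg' : HasDerivAt (gRad ν lam)
      (-Complex.I * (Real.sign lam : ℂ) *
        ((a * (∑' k : ℕ, Ak ν a k * r^(2*k)) - 2*ν * (∑' k : ℕ, Bk ν a k * r^(2*k)) : ℝ) : ℂ)) r :=
    (hGr.ofReal_comp.const_mul _).congr_of_eventuallyEq hgeq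
  have hfr2 : fRad ν lam r = (((∑' k : ℕ, Ak ν a k * r^(2*k)) : ℝ) : ℂ) := hfeq.self_of_nhds
  have hgr2 : gRad ν lam r
      = -Complex.I * (Real.sign lam : ℂ) * (((∑' k : ℕ, Bk ν a k * r^(2*k+1)) : ℝ) : ℂ) :=
    hgeq.self_of_nhds
  have hrc : (r : ℂ) ≠ 0 := Complex.ofReal_ne_zero.mpr hr.ne'
  refine ⟨hf'.differentiableAt, hg'.differentiableAt, ?_, ?_⟩
  · rw [hf'.deriv, hgr2]
    rcases hlam.lt_or_gt with h | h
    · rw [Real.sign_of_neg h, hA, abs_of_neg h]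
      push_cast
      ring
    · rw [Real.sign_of_pos h, hA, abs_of_pos h]
      push_cast
      ring
  · rw [hg'.deriv, hgr2, hfr2, sumB_factor hν ha r]
    rcases hlam.lt_or_gt with h | h
    · rw [Real.sign_of_neg h, hA, abs_of_neg h]
      push_cast
      field_simp
      linear_combination (-(lam:ℂ) * (∑' (k:ℕ), ((Ak ν (-lam) k : ℝ):ℂ) * (r:ℂ)^(2*k))) * Complex.I_sq
    · rw [Real.sign_of_pos h, hA, abs_of_pos h]
      push_cast
      field_simp
      linear_combination (-(lam:ℂ) * (∑' (k:ℕ), ((Ak ν lam k : ℝ):ℂ) * (r:ℂ)^(2*k))) * Complex.I_sq
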